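/- arXiv:1705.10833 — 4 statements merged into one kernel-verified Lean document; each statement's English description precedes it below -/
import Mathlib

section
/- Let A be an algebra whose congruence lattice D = Con(A) is finite, and let u ≠ v be elements of A. Then there exists a finite sequence u = w_0, w_1, ..., w_k = v of elements of A such that for every i < k, the principal congruence con(w_i, w_{i+1}) is join-irreducible in D. -/
set_option linter.unusedVariables false

/-- A general (finitary, one-sorted) algebra. -/
structure Alg : Type 1 where
  carrier : Type
  ι : Type
  arity : ι → ℕ
  ops : ∀ i : ι, (Fin (arity i) → carrier) → carrier

/-- A congruence of an algebra: an equivalence relation compatible with all operations. -/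
def IsCong (A : Alg) (r : A.carrier → A.carrier → Prop) : Prop :=
  Equivalence r ∧ ∀ (i : A.ι) (x y : Fin (A.arity i) → A.carrier),
    (∀ j, r (x j) (y j)) → r (A.ops i x) (A.ops i y)

/-- The congruences of an algebra `A`. -/
def AlgCon (A : Alg) : Type := {r : A.carrier → A.carrier → Prop // IsCong A r}

instance (A : Alg) : PartialOrder (AlgCon A) where
  le r s := ∀ a b, r.1 a b → s.1 a b
  le_refl r a b h := h
  le_trans r s t h1 h2 a b h := h2 a b (h1 a b h)
  le_antisymm r s h1 h2 := Subtype.ext (by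
    funext a b
    exact propext ⟨h1 a b, h2 a b⟩)

instance (A : Alg) : InfSet (AlgCon A) where
  sInf S := ⟨fun a b => ∀ r ∈ S, r.1 a b,
    ⟨⟨fun a r _ => r.2.1.refl a,
      fun h r hr => r.2.1.symm (h r hr),
      fun h1 h2 r hr => r.2.1.trans (h1 r hr) (h2 r hr)⟩,
     fun i x y h r hr => r.2.2 i x y (fun j => h j r hr)⟩⟩

instance (A : Alg) : CompleteLattice (AlgCon A) :=
  completeLatticeOfInf _ (fun S =>
    ⟨fun r hr a b h => h r hr, fun r hr a b h s hs => hr hs a b h⟩)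

/-- The principal congruence generated by the pair `(a, b)`. -/
def algPrinc (A : Alg) (a b : A.carrier) : AlgCon A := sInf {r : AlgCon A | r.1 a b}

/-- The set of principal congruences of `A`. -/
def AlgPrinc (A : Alg) : Set (AlgCon A) := {θ | ∃ a b, θ = algPrinc A a b}

/-! ### Auxiliary lemmas -/

lemma algPrinc_rel (A : Alg) (a b : A.carrier) : (algPrinc A a b).1 a b :=
  fun r hr => hr

lemma algPrinc_le (A : Alg) {a b : A.carrier} {r : AlgCon A} (h : r.1 a b) :
    algPrinc A a b ≤ r := fun x y hxy => hxy r h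

def eqCon (A : Alg) : AlgCon A :=
  ⟨Eq, ⟨eq_equivalence, fun i x y h => congrArg _ (funext h)⟩⟩

lemma bot_rel_eq (A : Alg) {a b : A.carrier} (h : (⊥ : AlgCon A).1 a b) : a = b :=
  (bot_le (a := eqCon A)) a b h

section Join
variable (A : Alg) (b c : AlgCon A)

/-- relation: chains alternating between `b` and `c`. -/
def jrel : A.carrier → A.carrier → Prop :=
  Relation.ReflTransGen (fun x y => b.1 x y ∨ c.1 x y)

lemma jrel_update_step (i : A.ι) (j : Fin (A.arity i)) (z : Fin (A.arity i) → A.carrier)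
    {a a' : A.carrier} (h : b.1 a a' ∨ c.1 a a') :
    b.1 (A.ops i (Function.update z j a)) (A.ops i (Function.update z j a')) ∨
      c.1 (A.ops i (Function.update z j a)) (A.ops i (Function.update z j a')) := by
  rcases h with h | h
  · exact Or.inl (b.2.2 i _ _ (fun m => by
      rcases eq_or_ne m j with rfl | hm
      · simpa using h
      · simp only [Function.update_apply, if_neg hm]
        exact b.2.1.refl _))
  · exact Or.inr (c.2.2 i _ _ (fun m => by
      rcases eq_or_ne m j with rfl | hm
      · simpa using h
      · simp only [Function.update_apply, if_neg hm]
        exact c.2.1.refl _))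

lemma jrel_update (i : A.ι) (j : Fin (A.arity i)) (z : Fin (A.arity i) → A.carrier)
    {a a' : A.carrier} (h : jrel A b c a a') :
    jrel A b c (A.ops i (Function.update z j a)) (A.ops i (Function.update z j a')) := by
  induction h with
  | refl => exact Relation.ReflTransGen.refl
  | tail h1 h2 IH =>
      exact IH.trans (Relation.ReflTransGen.single (jrel_update_step A b c i j z h2))

lemma jrel_compat_aux (i : A.ι) (s : Finset (Fin (A.arity i))) :
    ∀ x y : Fin (A.arity i) → A.carrier, (∀ j, jrel A b c (x j) (y j)) →
      (∀ j ∉ s, x j = y j) → jrel A b c (A.ops i x) (A.ops i y) := by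
  induction s using Finset.induction_on with
  | empty =>
      intro x y _ h2
      have : x = y := funext fun j => h2 j (by simp)
      rw [this]
      exact Relation.ReflTransGen.refl
  | @insert j s hj IH =>
      intro x y h1 h2
      have step : jrel A b c (A.ops i x) (A.ops i (Function.update x j (y j))) := by
        have := jrel_update A b c i j x (h1 j)
        simpa [Function.update_eq_self] using this
      refine step.trans (IH _ _ ?_ ?_)
      · intro m
        rcases eq_or_ne m j with rfl | hm
        · simp only [Function.update_self]
          exact Relation.ReflTransGen.refl
        · simp only [Function.update_apply, if_neg hm]
          exact h1 m
      · intro m hm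
        rcases eq_or_ne m j with rfl | hmj
        · simp
        · simp only [Function.update_apply, if_neg hmj]
          exact h2 m (by simp [hmj, hm])

lemma jrel_isCong : IsCong A (jrel A b c) := by
  constructor
  · refine ⟨fun a => Relation.ReflTransGen.refl, ?_, fun h1 h2 => h1.trans h2⟩
    · have hsym : Symmetric (fun x y => b.1 x y ∨ c.1 x y) := by
        intro x y h
        exact h.elim (fun h => Or.inl (b.2.1.symm h)) (fun h => Or.inr (c.2.1.symm h))
      intro x y h
      exact (@Relation.ReflTransGen.symmetric _ _ ⟨hsym⟩).symm _ _ h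
  · intro i x y h
    exact jrel_compat_aux A b c i Finset.univ x y h (by simp)

def jcon : AlgCon A := ⟨jrel A b c, jrel_isCong A b c⟩

lemma sup_le_jcon : b ⊔ c ≤ jcon A b c := by
  apply sup_le
  · exact fun x y h => Relation.ReflTransGen.single (Or.inl h)
  · exact fun x y h => Relation.ReflTransGen.single (Or.inr h)

end Join

lemma good_chain (A : Alg) [Finite (AlgCon A)] :
    ∀ θ : AlgCon A, ∀ u v : A.carrier, algPrinc A u v = θ →
      Relation.ReflTransGen (fun a b => SupIrred (algPrinc A a b)) u v := by
  intro θ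
  induction θ using WellFoundedLT.induction with
  | _ θ IH =>
    intro u v hθ
    rcases eq_or_ne u v with rfl | huv
    · exact Relation.ReflTransGen.refl
    by_cases hirr : SupIrred θ
    · exact Relation.ReflTransGen.single (hθ ▸ hirr)
    · rw [SupIrred] at hirr
      push_neg at hirr
      have hne : θ ≠ ⊥ := by
        intro h
        have : θ.1 u v := hθ ▸ algPrinc_rel A u v
        exact huv (bot_rel_eq A (h ▸ this))
      have hmin : ¬ IsMin θ := by
        intro h
        exact hne (le_antisymm (h bot_le) bot_le)
      obtain ⟨b, c, hbc, hb, hc⟩ := hirr hmin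
      have hbθ : b < θ := lt_of_le_of_ne (hbc ▸ le_sup_left) hb
      have hcθ : c < θ := lt_of_le_of_ne (hbc ▸ le_sup_right) hc
      have huvθ : θ.1 u v := hθ ▸ algPrinc_rel A u v
      have hj : jrel A b c u v := by
        have : θ ≤ jcon A b c := hbc ▸ sup_le_jcon A b c
        exact this u v huvθ
      -- convert each step of the chain via IH
      clear hθ huvθ hne hmin hbc hb hc huv
      induction hj with
      | refl => exact Relation.ReflTransGen.refl
      | @tail x y h1 h2 IH2 =>
        refine IH2.trans ?_
        rcases h2 with h2 | h2
        · rcases eq_or_ne x y with rfl | hxy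
          · exact Relation.ReflTransGen.refl
          · exact IH (algPrinc A x y) (lt_of_le_of_lt (algPrinc_le A h2) hbθ) x y rfl
        · rcases eq_or_ne x y with rfl | hxy
          · exact Relation.ReflTransGen.refl
          · exact IH (algPrinc A x y) (lt_of_le_of_lt (algPrinc_le A h2) hcθ) x y rfl

lemma chain_to_fin {α : Type} (r : α → α → Prop) {u v : α}
    (h : Relation.ReflTransGen r u v) :
    u = v ∨ ∃ (k : ℕ) (w : Fin (k + 1) → α), w 0 = u ∧ w (Fin.last k) = v ∧
      ∀ i : Fin k, r (w i.castSucc) (w i.succ) := by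
  induction h with
  | refl => exact Or.inl rfl
  | tail h1 h2 IH =>
    rename_i m v'
    right
    rcases IH with rfl | ⟨k, w, hw0, hwl, hws⟩
    · refine ⟨1, ![u, v'], rfl, rfl, ?_⟩
      intro i
      fin_cases i
      simpa using h2
    · refine ⟨k + 1, Fin.snoc w v', ?_, ?_, ?_⟩
      · rw [show (0 : Fin (k + 2)) = Fin.castSucc 0 by rfl, Fin.snoc_castSucc, hw0]
      · simp
      · intro i
        induction i using Fin.lastCases with
        | last =>
            simp only [Fin.snoc_castSucc, Fin.succ_last, Fin.snoc_last, hwl]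
            exact h2
        | cast j =>
            simp only [Fin.succ_castSucc, Fin.snoc_castSucc]
            exact hws j

/-- In an algebra with finite congruence lattice, any two distinct elements are
connected by a finite sequence of elements in which consecutive members generate
join-irreducible principal congruences. -/
theorem stmt_5 (A : Alg) [Finite (AlgCon A)] (u v : A.carrier) (huv : u ≠ v) :
    ∃ (k : ℕ) (w : Fin (k + 1) → A.carrier), w 0 = u ∧ w (Fin.last k) = v ∧
      ∀ i : Fin k, SupIrred (algPrinc A (w i.castSucc) (w i.succ)) := by
  have h := good_chain A (algPrinc A u v) u v rfl
  rcases chain_to_fin _ h with rfl | hc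
  · exact absurd rfl huv
  · exact hc
end

section
/- Let D be a finite distributive lattice with at least two elements that has exactly two coatoms. Then there is no algebra A such that Con(A) ≅ D via an isomorphism mapping Princ(A) onto D \ {1_D}. -/
set_option linter.unusedVariables false

lemma princ_rel (A : Alg) (x y : A.carrier) : (algPrinc A x y).1 x y :=
  fun _ hr => hr

lemma princ_le {A : Alg} {x y : A.carrier} {r : AlgCon A} (h : r.1 x y) :
    algPrinc A x y ≤ r := fun a b hab => hab r h

lemma rel_mono {A : Alg} {r s : AlgCon A} (h : r ≤ s) {a b : A.carrier}
    (hab : r.1 a b) : s.1 a b := h a b hab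

lemma princ_symm (A : Alg) (x y : A.carrier) : algPrinc A x y = algPrinc A y x := by
  apply le_antisymm
  · exact princ_le ((algPrinc A y x).2.1.symm (princ_rel A y x))
  · exact princ_le ((algPrinc A x y).2.1.symm (princ_rel A x y))

lemma princ_tri (A : Alg) (x u y : A.carrier) :
    algPrinc A x y ≤ algPrinc A x u ⊔ algPrinc A u y := by
  apply princ_le
  have h1 : (algPrinc A x u ⊔ algPrinc A u y).1 x u :=
    rel_mono le_sup_left (princ_rel A x u)
  have h2 : (algPrinc A x u ⊔ algPrinc A u y).1 u y :=
    rel_mono le_sup_right (princ_rel A u y)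
  exact (algPrinc A x u ⊔ algPrinc A u y).2.1.trans h1 h2

/-- A finite distributive lattice `D` with at least two elements and exactly two
coatoms: no algebra represents the inclusion `D \ {⊤} ⊆ D` by principal congruences. -/
theorem stmt_7 {D : Type} [DistribLattice D] [Fintype D] [BoundedOrder D]
    [Nontrivial D] (c₁ c₂ : D) (hne : c₁ ≠ c₂)
    (h₁ : IsCoatom c₁) (h₂ : IsCoatom c₂)
    (honly : ∀ x : D, IsCoatom x → x = c₁ ∨ x = c₂) :
    ¬ ∃ (A : Alg) (φ : AlgCon A ≃o D),
        (φ : AlgCon A → D) '' (AlgPrinc A) = {x : D | x ≠ ⊤} := by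
  rintro ⟨A, φ, hset⟩
  have hle12 : ¬ c₁ ≤ c₂ := fun h => h₂.1 (h₁.2 _ (lt_of_le_of_ne h hne))
  have hle21 : ¬ c₂ ≤ c₁ := fun h => h₁.1 (h₂.2 _ (lt_of_le_of_ne h hne.symm))
  -- principal congruences mapping to the coatoms
  have hc1 : c₁ ∈ (φ : AlgCon A → D) '' AlgPrinc A := by rw [hset]; exact h₁.1
  have hc2 : c₂ ∈ (φ : AlgCon A → D) '' AlgPrinc A := by rw [hset]; exact h₂.1
  obtain ⟨θ₁, ⟨a, b, rfl⟩, hθ₁⟩ := hc1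
  obtain ⟨θ₂, ⟨c, d, rfl⟩, hθ₂⟩ := hc2
  -- every principal congruence maps below a coatom
  have hcoat : ∀ x y : A.carrier, φ (algPrinc A x y) ≤ c₁ ∨ φ (algPrinc A x y) ≤ c₂ := by
    intro x y
    have hne' : φ (algPrinc A x y) ≠ ⊤ := by
      have : φ (algPrinc A x y) ∈ {z : D | z ≠ ⊤} := by
        rw [← hset]; exact ⟨algPrinc A x y, ⟨x, y, rfl⟩, rfl⟩
      exact this
    have : IsCoatomic D := by infer_instance
    rcases this.eq_top_or_exists_le_coatom (φ (algPrinc A x y)) with h | ⟨k, hk, hle⟩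
    · exact absurd h hne'
    · rcases honly k hk with rfl | rfl
      · exact Or.inl hle
      · exact Or.inr hle
  -- triangle inequality in D
  have tri : ∀ x u y : A.carrier,
      φ (algPrinc A x y) ≤ φ (algPrinc A x u) ⊔ φ (algPrinc A u y) := by
    intro x u y
    rw [← map_sup]
    exact φ.monotone (princ_tri A x u y)
  have symm' : ∀ x y : A.carrier, φ (algPrinc A x y) = φ (algPrinc A y x) :=
    fun x y => congrArg φ (princ_symm A x y)
  rcases hcoat a c with hg | hg
  · rcases hcoat b d with he | he
    · -- c₂ ≤ c₁ via chain c → a → b → d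
      apply hle21
      calc c₂ = φ (algPrinc A c d) := hθ₂.symm
        _ ≤ φ (algPrinc A c a) ⊔ φ (algPrinc A a d) := tri c a d
        _ ≤ φ (algPrinc A c a) ⊔ (φ (algPrinc A a b) ⊔ φ (algPrinc A b d)) :=
            sup_le_sup_left (tri a b d) _
        _ = φ (algPrinc A a c) ⊔ (c₁ ⊔ φ (algPrinc A b d)) := by
            rw [← symm' a c, hθ₁]
        _ ≤ c₁ ⊔ (c₁ ⊔ c₁) := sup_le_sup hg (sup_le_sup le_rfl he)
        _ = c₁ := by simp
    · rcases hcoat a d with hp | hp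
      · -- c₂ ≤ c₁ via chain c → a → d
        apply hle21
        calc c₂ = φ (algPrinc A c d) := hθ₂.symm
          _ ≤ φ (algPrinc A c a) ⊔ φ (algPrinc A a d) := tri c a d
          _ = φ (algPrinc A a c) ⊔ φ (algPrinc A a d) := by rw [← symm' a c]
          _ ≤ c₁ ⊔ c₁ := sup_le_sup hg hp
          _ = c₁ := by simp
      · -- c₁ ≤ c₂ via chain a → d → b
        apply hle12
        calc c₁ = φ (algPrinc A a b) := hθ₁.symm
          _ ≤ φ (algPrinc A a d) ⊔ φ (algPrinc A d b) := tri a d b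
          _ = φ (algPrinc A a d) ⊔ φ (algPrinc A b d) := by rw [← symm' b d]
          _ ≤ c₂ ⊔ c₂ := sup_le_sup hp he
          _ = c₂ := by simp
  · rcases hcoat b d with he | he
    · rcases hcoat b c with hq | hq
      · -- c₂ ≤ c₁ via chain c → b → d
        apply hle21
        calc c₂ = φ (algPrinc A c d) := hθ₂.symm
          _ ≤ φ (algPrinc A c b) ⊔ φ (algPrinc A b d) := tri c b d
          _ = φ (algPrinc A b c) ⊔ φ (algPrinc A b d) := by rw [← symm' b c]
          _ ≤ c₁ ⊔ c₁ := sup_le_sup hq he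
          _ = c₁ := by simp
      · -- c₁ ≤ c₂ via chain a → c → b
        apply hle12
        calc c₁ = φ (algPrinc A a b) := hθ₁.symm
          _ ≤ φ (algPrinc A a c) ⊔ φ (algPrinc A c b) := tri a c b
          _ = φ (algPrinc A a c) ⊔ φ (algPrinc A b c) := by rw [← symm' b c]
          _ ≤ c₂ ⊔ c₂ := sup_le_sup hg hq
          _ = c₂ := by simp
    · -- c₁ ≤ c₂ via chain a → c → d → b
      apply hle12
      calc c₁ = φ (algPrinc A a b) := hθ₁.symm
        _ ≤ φ (algPrinc A a c) ⊔ φ (algPrinc A c b) := tri a c b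
        _ ≤ φ (algPrinc A a c) ⊔ (φ (algPrinc A c d) ⊔ φ (algPrinc A d b)) :=
            sup_le_sup_left (tri c d b) _
        _ = φ (algPrinc A a c) ⊔ (c₂ ⊔ φ (algPrinc A b d)) := by
            rw [← symm' b d, hθ₂]
        _ ≤ c₂ ⊔ (c₂ ⊔ c₂) := sup_le_sup hg (sup_le_sup le_rfl he)
        _ = c₂ := by simp
end

section
/- With C, D, σ, 𝔄, and the isomorphism φ: D → Con(𝔄) as in the forcing-algebra construction, for every prime interval p of C the principal congruence con(0_p, 1_p) of 𝔄 equals φ(σ(p)). -/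
set_option linter.unusedVariables false

open scoped Classical

/-- The prime intervals (covering pairs) of an ordered set `C`. -/
abbrev PrimeInt (C : Type) [Preorder C] : Type := {e : C × C // e.1 ⋖ e.2}

/-- The element of `D` represented by the interval `[a, b]` of the colored chain:
the join of the colors of all prime intervals lying inside `[a, b]`. -/
noncomputable def chainRep {C D : Type} [LinearOrder C] [Fintype C]
    [Lattice D] [OrderBot D] (σ : PrimeInt C → D) (a b : C) : D :=
  (Finset.univ.filter (fun e : PrimeInt C => a ≤ e.1.1 ∧ e.1.2 ≤ b)).sup σ

/-- The subset of `D` represented by the colored chain `(C, σ)`. -/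
noncomputable def repSet {C D : Type} [LinearOrder C] [Fintype C]
    [Lattice D] [OrderBot D] (σ : PrimeInt C → D) : Set D :=
  {x : D | ∃ a b : C, a ≤ b ∧ x = chainRep σ a b}
/-- The contraction map of the interval `[u, v]` of a chain. -/
def contraction {C : Type} [LinearOrder C] (u v : C) (x : C) : C :=
  if v ≤ x then v else if u ≤ x then x else u

/-- The forcing map `f_{p,h}` associated with two distinct prime intervals `p`, `h`
of a chain: elements of the interior set between `p` and `h` are sent to the
endpoint of `h` adjacent to the interior set, all other elements to the other
endpoint of `h`. -/
def forcing {C : Type} [LinearOrder C] (p h : PrimeInt C) (x : C) : C :=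
  if p.1.2 ≤ h.1.1 then (if p.1.2 ≤ x ∧ x ≤ h.1.1 then h.1.1 else h.1.2)
  else (if h.1.2 ≤ x ∧ x ≤ p.1.1 then h.1.2 else h.1.1)

/-- The unary "forcing algebra" on the chain `C`, whose operations are all
contractions `g_{uv}` for `u < v` and all forcing maps `f_{p,h}` for distinct
prime intervals with `σ(p) ≥ σ(h)`. -/
def forcingAlg (C : Type) [LinearOrder C] {D : Type} [Lattice D]
    (σ : PrimeInt C → D) : Alg where
  carrier := C
  ι := {uv : C × C // uv.1 < uv.2} ⊕
    {ph : PrimeInt C × PrimeInt C // ph.1 ≠ ph.2 ∧ σ ph.2 ≤ σ ph.1}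
  arity _ := 1
  ops i x :=
    match i with
    | Sum.inl uv => contraction uv.1.1 uv.1.2 (x 0)
    | Sum.inr ph => forcing ph.1.1 ph.1.2 (x 0)

section AuxPrime
variable {C : Type} [LinearOrder C]

lemma covby_le_of_lt' {a b c : C} (h : a ⋖ b) (hc : a < c) : b ≤ c :=
  le_of_not_gt fun hcb => h.2 hc hcb

lemma le_covby_of_lt' {a b c : C} (h : a ⋖ b) (hc : c < b) : c ≤ a :=
  le_of_not_gt fun hac => h.2 hac hc

lemma prime_eq {q h : PrimeInt C} (h1 : h.1.1 ≤ q.1.1) (h2 : q.1.2 ≤ h.1.2) : q = h := by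
  have hq := q.2.1
  have e1 : q.1.1 = h.1.1 := le_antisymm (le_covby_of_lt' h.2 (lt_of_lt_of_le hq h2)) h1
  have e2 : q.1.2 = h.1.2 := le_antisymm h2 (covby_le_of_lt' h.2 (lt_of_le_of_lt h1 hq))
  exact Subtype.ext (Prod.ext e1 e2)

lemma prime_disjoint {p h : PrimeInt C} (hne : p ≠ h) (hlt : ¬ p.1.2 ≤ h.1.1) :
    h.1.2 ≤ p.1.1 := by
  have h1 : h.1.1 < p.1.2 := lt_of_not_ge hlt
  have h2 : h.1.1 ≤ p.1.1 := le_covby_of_lt' p.2 h1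
  rcases eq_or_lt_of_le h2 with he | hl
  · exact absurd (prime_eq he.symm.le (covby_le_of_lt' h.2 h1)).symm hne
  · exact covby_le_of_lt' h.2 hl

lemma exists_succ_le [Fintype C] {u v : C} (h : u < v) :
    ∃ w, u ⋖ w ∧ w ≤ v := by
  classical
  set T := Finset.univ.filter (fun x : C => u < x ∧ x ≤ v) with hT
  have hne : T.Nonempty := ⟨v, by simp [hT, h]⟩
  have hmem := Finset.mem_filter.mp (T.min'_mem hne)
  refine ⟨T.min' hne, ⟨hmem.2.1, ?_⟩, hmem.2.2⟩
  intro c hc hcw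
  have hcv : c ≤ v := le_of_lt (lt_of_lt_of_le hcw hmem.2.2)
  exact absurd (T.min'_le c (by simp [hT, hc, hcv])) (not_le.mpr hcw)

lemma contraction_key {u' v' a b q0 q1 : C} (huv : u' < v') (hab : a ≤ b)
    (hq : q0 < q1) (h1 : contraction u' v' a ≤ q0) (h2 : q1 ≤ contraction u' v' b) :
    a ≤ q0 ∧ q1 ≤ b := by
  unfold contraction at h1 h2
  by_cases hva : v' ≤ a
  · rw [if_pos hva] at h1
    rw [if_pos (le_trans hva hab)] at h2
    exact absurd (lt_of_lt_of_le hq h2) (not_lt.mpr h1)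
  · rw [if_neg hva] at h1
    by_cases hvb : v' ≤ b
    · rw [if_pos hvb] at h2
      by_cases hua : u' ≤ a
      · rw [if_pos hua] at h1; exact ⟨h1, le_trans h2 hvb⟩
      · rw [if_neg hua] at h1; exact ⟨le_trans (le_of_not_ge hua) h1, le_trans h2 hvb⟩
    · rw [if_neg hvb] at h2
      by_cases hub : u' ≤ b
      · rw [if_pos hub] at h2
        by_cases hua : u' ≤ a
        · rw [if_pos hua] at h1; exact ⟨h1, h2⟩
        · rw [if_neg hua] at h1; exact ⟨le_trans (le_of_not_ge hua) h1, h2⟩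
      · rw [if_neg hub] at h2
        have hua : ¬ u' ≤ a := fun h => hub (le_trans h hab)
        rw [if_neg hua] at h1
        exact absurd (lt_of_lt_of_le hq h2) (not_lt.mpr h1)

lemma contraction_mono {u v : C} (huv : u ≤ v) {s t : C} (hst : s ≤ t) :
    contraction u v s ≤ contraction u v t := by
  unfold contraction
  by_cases hvs : v ≤ s
  · rw [if_pos hvs, if_pos (le_trans hvs hst)]
  · rw [if_neg hvs]
    by_cases hvt : v ≤ t
    · rw [if_pos hvt]
      by_cases hus : u ≤ s
      · rw [if_pos hus]; exact le_of_not_ge hvs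
      · rw [if_neg hus]; exact huv
    · rw [if_neg hvt]
      by_cases hus : u ≤ s
      · rw [if_pos hus, if_pos (le_trans hus hst)]; exact hst
      · rw [if_neg hus]
        by_cases hut : u ≤ t
        · rw [if_pos hut]; exact hut
        · rw [if_neg hut]

lemma forcing_mem (p h : PrimeInt C) (x : C) :
    forcing p h x = h.1.1 ∨ forcing p h x = h.1.2 := by
  unfold forcing
  split_ifs <;> simp
end AuxPrime

section Rsec
variable {C : Type} [LinearOrder C] {D : Type} [Lattice D]

def Rrel (σ : PrimeInt C → D) (p : PrimeInt C) (u v : C) : Prop :=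
  ∀ q : PrimeInt C, u ⊓ v ≤ q.1.1 → q.1.2 ≤ u ⊔ v → σ q ≤ σ p

lemma Rrel_refl (σ : PrimeInt C → D) (p : PrimeInt C) (u : C) : Rrel σ p u u := by
  intro q h1 h2
  rw [inf_idem] at h1
  rw [sup_idem] at h2
  exact absurd (lt_of_lt_of_le q.2.1 (le_trans h2 h1)) (lt_irrefl _)

lemma Rrel_symm {σ : PrimeInt C → D} {p : PrimeInt C} {u v : C}
    (h : Rrel σ p u v) : Rrel σ p v u := by
  intro q h1 h2
  exact h q (by rwa [inf_comm]) (by rwa [sup_comm])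

lemma Rrel_trans {σ : PrimeInt C → D} {p : PrimeInt C} {a b c : C}
    (hab : Rrel σ p a b) (hbc : Rrel σ p b c) : Rrel σ p a c := by
  intro q h1 h2
  by_cases hb : b ≤ q.1.1
  · rcases le_sup_iff.mp h2 with h2a | h2c
    · exact hab q (le_trans inf_le_right hb) (le_trans h2a le_sup_left)
    · exact hbc q (le_trans inf_le_left hb) (le_trans h2c le_sup_right)
  · have hqb : q.1.2 ≤ b := covby_le_of_lt' q.2 (lt_of_not_ge hb)
    rcases inf_le_iff.mp h1 with h1a | h1c
    · exact hab q (le_trans inf_le_left h1a) (le_trans hqb le_sup_right)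
    · exact hbc q (le_trans inf_le_right h1c) (le_trans hqb le_sup_left)

lemma Rrel_isCong (σ : PrimeInt C → D) (p : PrimeInt C) :
    IsCong (forcingAlg C σ) (show C → C → Prop from Rrel σ p) := by
  refine ⟨⟨Rrel_refl σ p, Rrel_symm, Rrel_trans⟩, ?_⟩
  show ∀ (i : {uv : C × C // uv.1 < uv.2} ⊕
      {ph : PrimeInt C × PrimeInt C // ph.1 ≠ ph.2 ∧ σ ph.2 ≤ σ ph.1})
      (x y : Fin 1 → C), (∀ j, Rrel σ p (x j) (y j)) →
      Rrel σ p ((forcingAlg C σ).ops i x) ((forcingAlg C σ).ops i y)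
  intro i x y h
  rcases i with uv | ph
  · show Rrel σ p (contraction uv.1.1 uv.1.2 (x 0)) (contraction uv.1.1 uv.1.2 (y 0))
    have hab := h 0
    intro q h1 h2
    rcases le_total (x 0) (y 0) with hle | hle
    · have m1 : contraction uv.1.1 uv.1.2 (x 0) ≤ contraction uv.1.1 uv.1.2 (y 0) :=
        contraction_mono uv.2.le hle
      rw [inf_eq_left.2 m1] at h1
      rw [sup_eq_right.2 m1] at h2
      obtain ⟨g1, g2⟩ := contraction_key uv.2 hle q.2.1 h1 h2
      exact hab q (by rw [inf_eq_left.2 hle]; exact g1) (by rw [sup_eq_right.2 hle]; exact g2)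
    · have m1 : contraction uv.1.1 uv.1.2 (y 0) ≤ contraction uv.1.1 uv.1.2 (x 0) :=
        contraction_mono uv.2.le hle
      rw [inf_eq_right.2 m1] at h1
      rw [sup_eq_left.2 m1] at h2
      obtain ⟨g1, g2⟩ := contraction_key uv.2 hle q.2.1 h1 h2
      exact hab q (by rw [inf_eq_right.2 hle]; exact g1) (by rw [sup_eq_left.2 hle]; exact g2)
  · obtain ⟨⟨p', h'⟩, hne, hle⟩ := ph
    show Rrel σ p (forcing p' h' (x 0)) (forcing p' h' (y 0))
    have hab := h 0
    by_cases heq : forcing p' h' (x 0) = forcing p' h' (y 0)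
    · rw [heq]; exact Rrel_refl σ p _
    have hkey : σ h' ≤ σ p := by
      by_cases hor : p'.1.2 ≤ h'.1.1
      · have main : ∀ s t : C, Rrel σ p s t → (p'.1.2 ≤ s ∧ s ≤ h'.1.1) →
            ¬(p'.1.2 ≤ t ∧ t ≤ h'.1.1) → σ h' ≤ σ p := by
          intro s t hst hs ht
          rcases not_and_or.mp ht with h1 | h2
          · have htp : t ≤ p'.1.1 := le_covby_of_lt' p'.2 (lt_of_not_ge h1)
            exact le_trans hle (hst p' (le_trans inf_le_right htp) (le_trans hs.1 le_sup_left))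
          · have hht : h'.1.2 ≤ t := covby_le_of_lt' h'.2 (lt_of_not_ge h2)
            exact hst h' (le_trans inf_le_left hs.2) (le_trans hht le_sup_right)
        by_cases hca : p'.1.2 ≤ x 0 ∧ x 0 ≤ h'.1.1
        · by_cases hcb : p'.1.2 ≤ y 0 ∧ y 0 ≤ h'.1.1
          · exact absurd (by unfold forcing; rw [if_pos hor, if_pos hor, if_pos hca, if_pos hcb]) heq
          · exact main _ _ hab hca hcb
        · by_cases hcb : p'.1.2 ≤ y 0 ∧ y 0 ≤ h'.1.1
          · exact main _ _ (Rrel_symm hab) hcb hca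
          · exact absurd (by unfold forcing; rw [if_pos hor, if_pos hor, if_neg hca, if_neg hcb]) heq
      · have hd := prime_disjoint hne hor
        have main : ∀ s t : C, Rrel σ p s t → (h'.1.2 ≤ s ∧ s ≤ p'.1.1) →
            ¬(h'.1.2 ≤ t ∧ t ≤ p'.1.1) → σ h' ≤ σ p := by
          intro s t hst hs ht
          rcases not_and_or.mp ht with h1 | h2
          · have hth : t ≤ h'.1.1 := le_covby_of_lt' h'.2 (lt_of_not_ge h1)
            exact hst h' (le_trans inf_le_right hth) (le_trans hs.1 le_sup_left)
          · have hpt : p'.1.2 ≤ t := covby_le_of_lt' p'.2 (lt_of_not_ge h2)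
            exact le_trans hle (hst p' (le_trans inf_le_left hs.2) (le_trans hpt le_sup_right))
        by_cases hca : h'.1.2 ≤ x 0 ∧ x 0 ≤ p'.1.1
        · by_cases hcb : h'.1.2 ≤ y 0 ∧ y 0 ≤ p'.1.1
          · exact absurd (by unfold forcing; rw [if_neg hor, if_neg hor, if_pos hca, if_pos hcb]) heq
          · exact main _ _ hab hca hcb
        · by_cases hcb : h'.1.2 ≤ y 0 ∧ y 0 ≤ p'.1.1
          · exact main _ _ (Rrel_symm hab) hcb hca
          · exact absurd (by unfold forcing; rw [if_neg hor, if_neg hor, if_neg hca, if_neg hcb]) heq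
    intro q h1 h2
    rcases forcing_mem p' h' (x 0) with ea | ea <;> rcases forcing_mem p' h' (y 0) with eb | eb
    · rw [ea, eb] at heq; exact absurd rfl heq
    · rw [ea, eb] at h1 h2
      rw [inf_eq_left.2 h'.2.1.le] at h1
      rw [sup_eq_right.2 h'.2.1.le] at h2
      rw [prime_eq h1 h2]; exact hkey
    · rw [ea, eb] at h1 h2
      rw [inf_eq_right.2 h'.2.1.le] at h1
      rw [sup_eq_left.2 h'.2.1.le] at h2
      rw [prime_eq h1 h2]; exact hkey
    · rw [ea, eb] at heq; exact absurd rfl heq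
end Rsec

/-- In the forcing algebra, the principal congruence generated by the endpoints of
a prime interval `p` is `φ(σ(p))`, where
`φ(x) = {(u,v) : σ(q) ≤ x for all prime intervals q of [u⊓v, u⊔v]}`. -/
theorem stmt_15 (C : Type) [LinearOrder C] [Fintype C]
    {D : Type} [DistribLattice D] [Fintype D] [BoundedOrder D]
    (σ : PrimeInt C → D) (hJ : ∀ e : PrimeInt C, SupIrred (σ e))
    (hsurj : ∀ x : D, SupIrred x → ∃ e : PrimeInt C, σ e = x) :
    ∀ p : PrimeInt C, ∀ u v : C,
      (algPrinc (forcingAlg C σ) p.1.1 p.1.2).1 u v ↔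
        ∀ q : PrimeInt C, u ⊓ v ≤ q.1.1 → q.1.2 ≤ u ⊔ v → σ q ≤ σ p := by
  intro p u v
  constructor
  · intro hu q h1 h2
    have hmem : Rrel σ p p.1.1 p.1.2 := by
      intro q' hq1 hq2
      rw [inf_eq_left.2 p.2.1.le] at hq1
      rw [sup_eq_right.2 p.2.1.le] at hq2
      rw [prime_eq hq1 hq2]
    exact hu ⟨show C → C → Prop from Rrel σ p, Rrel_isCong σ p⟩ hmem q h1 h2
  · intro hR
    have hcong : IsCong (forcingAlg C σ) (algPrinc (forcingAlg C σ) p.1.1 p.1.2).1 :=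
      (algPrinc (forcingAlg C σ) p.1.1 p.1.2).2
    have hpp : (algPrinc (forcingAlg C σ) p.1.1 p.1.2).1 p.1.1 p.1.2 := fun r hr => hr
    have stepA : ∀ h' : PrimeInt C, σ h' ≤ σ p →
        (algPrinc (forcingAlg C σ) p.1.1 p.1.2).1 h'.1.1 h'.1.2 := by
      intro h' hle
      by_cases hep : p = h'
      · rw [← hep]; exact hpp
      · have hop : (algPrinc (forcingAlg C σ) p.1.1 p.1.2).1
            (show C from forcing p h' p.1.1) (show C from forcing p h' p.1.2) :=
          hcong.2 (show {uv : C × C // uv.1 < uv.2} ⊕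
              {ph : PrimeInt C × PrimeInt C // ph.1 ≠ ph.2 ∧ σ ph.2 ≤ σ ph.1} from
              Sum.inr ⟨(p, h'), hep, hle⟩)
            (fun _ => p.1.1) (fun _ => p.1.2) (fun j => hpp)
        by_cases hor : p.1.2 ≤ h'.1.1
        · have e1 : forcing p h' p.1.1 = h'.1.2 := by
            unfold forcing
            rw [if_pos hor, if_neg (fun hc => absurd hc.1 (not_le.mpr p.2.1))]
          have e2 : forcing p h' p.1.2 = h'.1.1 := by
            unfold forcing; rw [if_pos hor, if_pos ⟨le_refl _, hor⟩]
          rw [e1, e2] at hop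
          exact hcong.1.symm hop
        · have hd := prime_disjoint hep hor
          have e1 : forcing p h' p.1.1 = h'.1.2 := by
            unfold forcing; rw [if_neg hor, if_pos ⟨hd, le_refl _⟩]
          have e2 : forcing p h' p.1.2 = h'.1.1 := by
            unfold forcing
            rw [if_neg hor, if_neg (fun hc => absurd hc.2 (not_le.mpr p.2.1))]
          rw [e1, e2] at hop
          exact hcong.1.symm hop
    have key : ∀ n : ℕ, ∀ a b : C,
        (Finset.univ.filter fun x : C => a < x ∧ x ≤ b).card ≤ n → a ≤ b →
        (∀ q : PrimeInt C, a ≤ q.1.1 → q.1.2 ≤ b → σ q ≤ σ p) →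
        (algPrinc (forcingAlg C σ) p.1.1 p.1.2).1 a b := by
      intro n
      induction n with
      | zero =>
        intro a b hcard hab hq
        rcases eq_or_lt_of_le hab with rfl | hlt
        · exact hcong.1.refl a
        · exfalso
          have hb : b ∈ Finset.univ.filter fun x : C => a < x ∧ x ≤ b := by simp [hlt]
          have := Finset.card_pos.mpr ⟨b, hb⟩
          omega
      | succ n ih =>
        intro a b hcard hab hq
        rcases eq_or_lt_of_le hab with rfl | hlt
        · exact hcong.1.refl a
        · obtain ⟨w, hcov, hwb⟩ := exists_succ_le hlt
          have haw := stepA ⟨(a, w), hcov⟩ (hq ⟨(a, w), hcov⟩ le_rfl hwb)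
          have hsubset : (Finset.univ.filter fun x : C => w < x ∧ x ≤ b) ⊆
              (Finset.univ.filter fun x : C => a < x ∧ x ≤ b) := by
            intro z hz
            simp only [Finset.mem_filter, Finset.mem_univ, true_and] at hz ⊢
            exact ⟨lt_trans hcov.1 hz.1, hz.2⟩
          have hssub := (Finset.ssubset_iff_of_subset hsubset).2
            ⟨w, by simp [hcov.1, hwb], by simp⟩
          have hcard' : (Finset.univ.filter fun x : C => w < x ∧ x ≤ b).card ≤ n :=
            Nat.lt_succ_iff.mp (lt_of_lt_of_le (Finset.card_lt_card hssub) hcard)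
          have hwb' := ih w b hcard' hwb (fun q h1 h2 => hq q (le_trans hcov.1.le h1) h2)
          exact hcong.1.trans haw hwb'
    rcases le_total u v with huv | hvu
    · exact key _ u v le_rfl huv (fun q h1 h2 =>
        hR q (by rw [inf_eq_left.2 huv]; exact h1) (by rw [sup_eq_right.2 huv]; exact h2))
    · exact hcong.1.symm (key _ v u le_rfl hvu (fun q h1 h2 =>
        hR q (by rw [inf_eq_right.2 hvu]; exact h1) (by rw [sup_eq_left.2 hvu]; exact h2)))
end

section
/- Let D be a finite distributive lattice in which J(D) contains a three-element antichain {p_0, p_1, p_2}, and let S be any subset of D that is closed under the following property: whenever r, q ∈ J(D) with r ∨ q ∈ S and r ∨ q join-reducible, then r ∨ q ∈ {p_0 ∨ p_1 ∨ p_2, 1_D}. Then in any surjectively J(D)-colored finite chain (C, σ) with represented set equal to J(D) ∪ {0, 1, p_0∨p_1∨p_2}, a contradiction arises; hence no such colored chain exists. -/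
open scoped Classical

section Aux

variable {C D : Type} [LinearOrder C] [Fintype C] [Lattice D] [OrderBot D]

lemma chainRep_self (σ : PrimeInt C → D) (a : C) : chainRep σ a a = ⊥ := by
  unfold chainRep
  rw [Finset.filter_false_of_mem, Finset.sup_empty]
  rintro e - ⟨h1, h2⟩
  exact absurd (h2.trans h1) (not_le.2 e.2.lt)

lemma chainRep_le (σ : PrimeInt C → D) {a a' b b' : C} (ha : a ≤ a') (hb : b' ≤ b) :
    chainRep σ a' b' ≤ chainRep σ a b := by
  apply Finset.sup_mono
  intro e he
  simp only [Finset.mem_filter, Finset.mem_univ, true_and] at he ⊢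
  exact ⟨ha.trans he.1, he.2.trans hb⟩

lemma chainRep_split (σ : PrimeInt C → D) {a a' b : C} (h : a ⋖ a') (hb : a' ≤ b) :
    chainRep σ a b = σ ⟨(a, a'), h⟩ ⊔ chainRep σ a' b := by
  apply le_antisymm
  · apply Finset.sup_le
    intro e he
    simp only [Finset.mem_filter, Finset.mem_univ, true_and] at he
    rcases lt_or_ge e.1.1 a' with hlt | hge
    · have he1 : e.1.1 = a := by
        rcases eq_or_lt_of_le he.1 with h' | h'
        · exact h'.symm
        · exact absurd hlt (h.2 h')
      have he2 : e.1.2 = a' := by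
        have hc : a ⋖ e.1.2 := he1 ▸ e.2
        rcases lt_trichotomy e.1.2 a' with h' | h' | h'
        · exact (h.2 hc.lt h').elim
        · exact h'
        · exact (hc.2 h.lt h').elim
      have : e = ⟨(a, a'), h⟩ := Subtype.ext (Prod.ext he1 he2)
      rw [this]; exact le_sup_left
    · refine le_trans ?_ le_sup_right
      apply Finset.le_sup
      simp only [Finset.mem_filter, Finset.mem_univ, true_and]
      exact ⟨hge, he.2⟩
  · apply sup_le
    · apply Finset.le_sup
      simp only [Finset.mem_filter, Finset.mem_univ, true_and]
      exact ⟨le_refl a, hb⟩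
    · exact chainRep_le σ h.le le_rfl

end Aux

/-- Given a three-element antichain `{p₀, p₁, p₂}` of join-irreducibles in a finite
distributive lattice `D`, and any subset `S` of `D` such that every join-reducible
join `r ⊔ q` of two join-irreducibles lying in `S` equals `p₀ ⊔ p₁ ⊔ p₂` or `⊤`,
no surjectively `J(D)`-colored finite chain has represented set
`J(D) ∪ {⊥, ⊤, p₀ ⊔ p₁ ⊔ p₂}`. -/
theorem stmt_19 {D : Type} [DistribLattice D] [Fintype D] [BoundedOrder D]
    (p₀ p₁ p₂ : D) (h0 : SupIrred p₀) (h1 : SupIrred p₁) (h2 : SupIrred p₂)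
    (ha01 : ¬ p₀ ≤ p₁) (ha10 : ¬ p₁ ≤ p₀) (ha02 : ¬ p₀ ≤ p₂) (ha20 : ¬ p₂ ≤ p₀)
    (ha12 : ¬ p₁ ≤ p₂) (ha21 : ¬ p₂ ≤ p₁)
    (S : Set D)
    (hS : ∀ r q : D, SupIrred r → SupIrred q → r ⊔ q ∈ S →
      (∃ a b : D, a < r ⊔ q ∧ b < r ⊔ q ∧ a ⊔ b = r ⊔ q) →
      r ⊔ q = p₀ ⊔ p₁ ⊔ p₂ ∨ r ⊔ q = ⊤)
    (C : Type) [LinearOrder C] [Fintype C] [Nonempty C]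
    (σ : PrimeInt C → D) (hJ : ∀ e : PrimeInt C, SupIrred (σ e))
    (hsurj : ∀ x : D, SupIrred x → ∃ e : PrimeInt C, σ e = x) :
    repSet σ ≠ {x : D | SupIrred x} ∪ {⊥, ⊤, p₀ ⊔ p₁ ⊔ p₂} := by
  intro hrep
  set s : D := p₀ ⊔ p₁ ⊔ p₂ with hs
  -- basic facts about s
  have hp0s : p₀ ≤ s := le_sup_left.trans le_sup_left
  have hp1s : p₁ ≤ s := le_sup_right.trans le_sup_left
  have hp2s : p₂ ≤ s := le_sup_right
  have hp0 := h0.supPrime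
  have hp1 := h1.supPrime
  have hp2 := h2.supPrime
  have hsne : ¬ SupIrred s := by
    intro hirr
    have : p₀ ⊔ (p₁ ⊔ p₂) = s := by rw [hs, sup_assoc]
    rcases hirr.2 this with h' | h'
    · exact ha10 (h' ▸ hp1s)
    · rcases hp0.2 (h' ▸ hp0s) with h'' | h''
      · exact ha01 h''
      · exact ha02 h''
  have hsbot : s ≠ ⊥ := fun h => hp0.ne_bot (le_bot_iff.1 (h ▸ hp0s))
  -- if an irreducible r ≤ s then r ≤ some pᵢ
  have hle3 : ∀ r : D, SupPrime r → r ≤ s → r ≤ p₀ ∨ r ≤ p₁ ∨ r ≤ p₂ := by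
    intro r hr hrs
    rcases hr.2 hrs with h' | h'
    · rcases hr.2 h' with h'' | h''
      · exact Or.inl h''
      · exact Or.inr (Or.inl h'')
    · exact Or.inr (Or.inr h')
  -- s is in the represented set
  have hsmem : s ∈ repSet σ := by
    rw [hrep]; right; right; right; rfl
  -- pick an interval representing s with minimal cardinality
  classical
  letI : LocallyFiniteOrder C := Fintype.toLocallyFiniteOrder
  set T : Finset (C × C) :=
    Finset.univ.filter (fun p : C × C => p.1 ≤ p.2 ∧ chainRep σ p.1 p.2 = s) with hT
  have hTne : T.Nonempty := by
    obtain ⟨a, b, hab, habs⟩ := hsmem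
    exact ⟨(a, b), Finset.mem_filter.2 ⟨Finset.mem_univ _, hab, habs.symm⟩⟩
  obtain ⟨⟨a, b⟩, hmemT, hmin⟩ :=
    T.exists_min_image (fun p : C × C => (Finset.Icc p.1 p.2).card) hTne
  simp only [hT, Finset.mem_filter, Finset.mem_univ, true_and] at hmemT
  obtain ⟨hab, habs⟩ := hmemT
  have haltb : a < b := by
    rcases lt_or_eq_of_le hab with h' | h'
    · exact h'
    · exact absurd (h' ▸ habs) (by rw [chainRep_self]; exact fun h => hsbot h.symm)
  -- find the cover a' of a inside (a, b]
  have hIne : (Finset.Ioc a b).Nonempty := ⟨b, by simp [haltb]⟩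
  set a' := (Finset.Ioc a b).min' hIne with ha'
  have ha'mem := (Finset.Ioc a b).min'_mem hIne
  rw [Finset.mem_Ioc] at ha'mem
  have hcov : a ⋖ a' := by
    constructor
    · exact ha'mem.1
    · intro z hz hz'
      have : z ∈ Finset.Ioc a b := Finset.mem_Ioc.2 ⟨hz, hz'.le.trans ha'mem.2⟩
      exact absurd ((Finset.Ioc a b).min'_le z this) (not_le.2 hz')
  have hsplit := chainRep_split σ hcov ha'mem.2
  rw [habs] at hsplit
  set x := chainRep σ a' b with hx
  set r := σ ⟨(a, a'), hcov⟩ with hr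
  -- x < s by minimality
  have hxles : x ≤ s := habs ▸ chainRep_le σ hcov.le le_rfl
  have hxne : x ≠ s := by
    intro hxs
    have hmem : (a', b) ∈ T := by simp [hT, ha'mem.2, ← hxs, hx]; exact ha'mem.2
    have hcard := hmin (a', b) hmem
    have hsub : Finset.Icc a' b ⊂ Finset.Icc a b := by
      constructor
      · intro z hz
        rw [Finset.mem_Icc] at hz ⊢
        exact ⟨hcov.le.trans hz.1, hz.2⟩
      · intro hsub'
        have : a ∈ Finset.Icc a' b := hsub' (Finset.mem_Icc.2 ⟨le_rfl, hab⟩)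
        rw [Finset.mem_Icc] at this
        exact absurd this.1 (not_le.2 hcov.lt)
    exact absurd hcard (not_le.2 (Finset.card_lt_card hsub))
  have hxlts : x < s := lt_of_le_of_ne hxles hxne
  -- x ∈ repSet, hence x is ⊥ or irreducible
  have hxmem : x ∈ repSet σ := ⟨a', b, ha'mem.2, rfl⟩
  rw [hrep] at hxmem
  have hxcase : x = ⊥ ∨ SupIrred x := by
    rcases hxmem with h' | h' | h' | h'
    · exact Or.inr h'
    · exact Or.inl h'
    · exact (not_top_lt (h' ▸ hxlts)).elim
    · exact (hxne h').elim
  have hrirr : SupIrred r := hJ _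
  rcases hxcase with hxbot | hxirr
  · rw [hxbot, sup_bot_eq] at hsplit
    exact hsne (hsplit ▸ hrirr)
  · -- s = r ⊔ x with r, x irreducible; derive contradiction
    have hrles : r ≤ s := hsplit ▸ le_sup_left
    have hri := hle3 r hrirr.supPrime hrles
    have hxi := hle3 x hxirr.supPrime hxles
    -- p_k ≤ s = r ⊔ x ≤ p_i ⊔ p_j
    have key : ∀ p : D, SupPrime p → p ≤ s → (p ≤ p₀ → False) → (p ≤ p₁ → False) →
        (p ≤ p₂ → False) → False := by
      intro p hp hps hn0 hn1 hn2
      rcases hle3 p hp hps with h' | h' | h'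
      · exact hn0 h'
      · exact hn1 h'
      · exact hn2 h'
    have hsle : ∀ u v : D, r ≤ u → x ≤ v → s ≤ u ⊔ v := by
      intro u v hu hv
      calc s = r ⊔ x := hsplit
        _ ≤ u ⊔ v := sup_le_sup hu hv
    rcases hri with hu | hu | hu <;> rcases hxi with hv | hv | hv
    -- both ≤ same pᵢ: then s ≤ pᵢ, contradicts another pⱼ ≤ pᵢ
    · exact ha10 (hp1s.trans (hsplit.le.trans (sup_le hu hv)))
    · rcases hp2.2 (hp2s.trans (hsle _ _ hu hv)) with h' | h' <;> [exact ha20 h'; exact ha21 h']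
    · rcases hp1.2 (hp1s.trans (hsle _ _ hu hv)) with h' | h' <;> [exact ha10 h'; exact ha12 h']
    · rcases hp2.2 (hp2s.trans (hsle _ _ hu hv)) with h' | h' <;> [exact ha21 h'; exact ha20 h']
    · exact ha01 (hp0s.trans (hsplit.le.trans (sup_le hu hv)))
    · rcases hp0.2 (hp0s.trans (hsle _ _ hu hv)) with h' | h' <;> [exact ha01 h'; exact ha02 h']
    · rcases hp1.2 (hp1s.trans (hsle _ _ hu hv)) with h' | h' <;> [exact ha12 h'; exact ha10 h']
    · rcases hp0.2 (hp0s.trans (hsle _ _ hu hv)) with h' | h' <;> [exact ha02 h'; exact ha01 h']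
    · exact ha02 (hp0s.trans (hsplit.le.trans (sup_le hu hv)))
end
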